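/- arXiv:1703.06874 — 5 statements merged into one kernel-verified Lean document; each statement's English description precedes it below -/
import Mathlib

section
/- Let p, q > 1 be coprime positive integers and let p*, q* be integers with p*p - q*q = 1 and 0 ≤ q* < p. Then for every positive integer k, (1/k)·(1 + ⌊(q*/p)·k⌋ + ⌊k/(p+q)⌋) ≥ p*/q. -/
lemma myfloor (a b : ℤ) (hb : 0 < b) : ⌊(a : ℚ) / (b : ℚ)⌋ = a / b := by
  have hb' : (0 : ℚ) < (b : ℚ) := by exact_mod_cast hb
  have hd := Int.mul_ediv_add_emod a b
  have h0 := Int.emod_nonneg a (ne_of_gt hb)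
  have h1 := Int.emod_lt_of_pos a hb
  rw [Int.floor_eq_iff]
  constructor
  · rw [le_div_iff₀ hb']
    exact_mod_cast (by nlinarith : (a / b) * b ≤ a)
  · rw [div_lt_iff₀ hb']
    exact_mod_cast (by nlinarith : a < (a / b + 1) * b)

/-- For coprime `p, q > 1` with `p*p - q*q = 1`, `0 ≤ q* < p`, and every positive
integer `k`, `(1/k)·(1 + ⌊(q*/p)·k⌋ + ⌊k/(p+q)⌋) ≥ p*/q`. -/
theorem stmt1 (p q ps qs : ℤ) (hp : 1 < p) (hq : 1 < q) (hco : IsCoprime p q)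
    (h1 : ps * p - qs * q = 1) (h2 : 0 ≤ qs) (h3 : qs < p) :
    ∀ k : ℤ, 0 < k →
      (1 / (k : ℚ)) * ((1 : ℚ) + (⌊((qs : ℚ) / p) * k⌋ : ℤ) + (⌊(k : ℚ) / ((p : ℚ) + q)⌋ : ℤ))
        ≥ (ps : ℚ) / q := by
  intro k hk
  have hp0 : (0:ℤ) < p := by linarith
  have hpq0 : (0:ℤ) < p + q := by linarith
  have e1 : ((qs : ℚ) / p) * k = ((qs * k : ℤ) : ℚ) / ((p : ℤ) : ℚ) := by
    push_cast; field_simp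
  have e2 : (k : ℚ) / ((p : ℚ) + q) = ((k : ℤ) : ℚ) / (((p + q : ℤ)) : ℚ) := by
    push_cast; ring
  rw [e1, e2, myfloor _ _ hp0, myfloor _ _ hpq0]
  set A := (qs * k) / p with hA
  set B := k / (p + q) with hB
  -- integer inequality: ps * k ≤ q * (1 + A + B)
  have key : ps * k ≤ q * (1 + A + B) := by
    have hrd := Int.mul_ediv_add_emod (qs * k) p
    have hr0 := Int.emod_nonneg (qs * k) (ne_of_gt hp0)
    have hr1 := Int.emod_lt_of_pos (qs * k) hp0
    have hsd := Int.mul_ediv_add_emod k (p + q)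
    have hs0 := Int.emod_nonneg k (ne_of_gt hpq0)
    have hs1 := Int.emod_lt_of_pos k hpq0
    set r := (qs * k) % p
    set s := k % (p + q)
    have hB0 : 0 ≤ B := Int.ediv_nonneg (le_of_lt hk) (le_of_lt hpq0)
    have hM : p * (ps * k - q * A) = k + q * r := by nlinarith [h1]
    have hlt : p * (ps * k - q * A) < p * (q * (1 + B) + 1) := by
      rw [hM]
      nlinarith [mul_nonneg hB0 (by nlinarith : (0:ℤ) ≤ p * q - p - q)]
    have := lt_of_mul_lt_mul_left hlt (le_of_lt hp0)
    nlinarith [this]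
  -- convert to ℚ
  have hkq : (0:ℚ) < (k : ℚ) := by exact_mod_cast hk
  have hqq : (0:ℚ) < (q : ℚ) := by exact_mod_cast (by linarith : (0:ℤ) < q)
  rw [ge_iff_le, div_le_iff₀ hqq, one_div, inv_mul_eq_div, div_mul_eq_mul_div,
    le_div_iff₀ hkq]
  have : ((ps * k : ℤ) : ℚ) ≤ ((q * (1 + A + B) : ℤ) : ℚ) := by exact_mod_cast key
  push_cast at this ⊢
  nlinarith [this]
end

section
/- Let p, q > 1 be coprime integers and let k be an integer with 0 < k < p+q such that p does not divide k and q does not divide k. If p⁻¹ and q⁻¹ denote multiplicative inverses of p mod q and q mod p respectively, then q·[k·q⁻¹]_p + p·[k·p⁻¹]_q = k + pq, where [a]_m denotes the least nonnegative residue of a modulo m. -/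
/-- For coprime `p, q > 1`, `0 < k < p + q` with `p ∤ k`, `q ∤ k`, and `qinv`, `pinv`
inverses of `q` mod `p` and of `p` mod `q`, one has
`q·[k·q⁻¹]_p + p·[k·p⁻¹]_q = k + pq`. -/
theorem stmt2 (p q k pinv qinv : ℤ) (hp : 1 < p) (hq : 1 < q) (hco : IsCoprime p q)
    (hk0 : 0 < k) (hk : k < p + q) (hpk : ¬ p ∣ k) (hqk : ¬ q ∣ k)
    (hqinv : q * qinv ≡ 1 [ZMOD p]) (hpinv : p * pinv ≡ 1 [ZMOD q]) :
    q * ((k * qinv) % p) + p * ((k * pinv) % q) = k + p * q := by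
  set a := (k * qinv) % p with ha
  set b := (k * pinv) % q with hb
  have hp0 : (0:ℤ) < p := by omega
  have hq0 : (0:ℤ) < q := by omega
  have ha0 : 0 ≤ a := Int.emod_nonneg _ (by omega)
  have hap : a < p := Int.emod_lt_of_pos _ hp0
  have hb0 : 0 ≤ b := Int.emod_nonneg _ (by omega)
  have hbq : b < q := Int.emod_lt_of_pos _ hq0
  obtain ⟨t, ht⟩ := Int.ModEq.dvd hqinv
  obtain ⟨s, hs⟩ := Int.ModEq.dvd hpinv
  have hcop : IsCoprime p qinv := ⟨t, q, by linarith [ht]⟩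
  have hcoq : IsCoprime q pinv := ⟨s, p, by linarith [hs]⟩
  have ha1 : a ≠ 0 := fun h =>
    hpk (hcop.dvd_of_dvd_mul_right (Int.dvd_of_emod_eq_zero h))
  have hb1 : b ≠ 0 := fun h =>
    hqk (hcoq.dvd_of_dvd_mul_right (Int.dvd_of_emod_eq_zero h))
  obtain ⟨u, hu⟩ : p ∣ k * qinv - a := Int.dvd_self_sub_of_emod_eq rfl
  obtain ⟨v, hv⟩ : q ∣ k * pinv - b := Int.dvd_self_sub_of_emod_eq rfl
  have hdp : p ∣ q * a + p * b - k :=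
    ⟨b - q * u - k * t, by linear_combination (-q) * hu + (-k) * ht⟩
  have hdq : q ∣ q * a + p * b - k :=
    ⟨a - p * v - k * s, by linear_combination (-p) * hv + (-k) * hs⟩
  obtain ⟨w, hw⟩ : p * q ∣ q * a + p * b - k := hco.mul_dvd hdp hdq
  -- Now show w = 1
  have ha1' : 1 ≤ a := by omega
  have hb1' : 1 ≤ b := by omega
  have hqa : q * 1 ≤ q * a := mul_le_mul_of_nonneg_left ha1' hq0.le
  have hpb : p * 1 ≤ p * b := mul_le_mul_of_nonneg_left hb1' hp0.le
  have hqa' : q * a ≤ q * (p - 1) := mul_le_mul_of_nonneg_left (by omega) hq0.le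
  have hpb' : p * b ≤ p * (q - 1) := mul_le_mul_of_nonneg_left (by omega) hp0.le
  have hpq : 0 < p * q := mul_pos hp0 hq0
  have hwpos : 0 < w := by nlinarith
  have hwle : w < 2 := by nlinarith
  have : w = 1 := by omega
  subst this
  linarith
end

section
/- Let p, q be coprime positive integers with inverses q⁻¹ of q mod p and p⁻¹ of p mod q. Then for every integer k, q·[q⁻¹·k]_p + p·[p⁻¹·k]_q ≡ k (mod pq), and if additionally p ∤ k and q ∤ k, then q·[q⁻¹·k]_p + p·[p⁻¹·k]_q equals either k + pq or k + 2pq minus appropriate multiples; in particular when 0 < k < p+q with p ∤ k, q ∤ k one has q·[q⁻¹·k]_p + p·[p⁻¹·k]_q = pq + k. -/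
/-- For coprime positive `p, q` with inverses `qinv` of `q` mod `p` and `pinv` of `p`
mod `q`: for every integer `k`, `q·[q⁻¹k]_p + p·[p⁻¹k]_q ≡ k (mod pq)`; and if
`0 < k < p + q` with `p ∤ k` and `q ∤ k`, then `q·[q⁻¹k]_p + p·[p⁻¹k]_q = pq + k`. -/
theorem stmt3 (p q pinv qinv : ℤ) (hp : 0 < p) (hq : 0 < q) (hco : IsCoprime p q)
    (hqinv : q * qinv ≡ 1 [ZMOD p]) (hpinv : p * pinv ≡ 1 [ZMOD q]) :
    (∀ k : ℤ, q * ((qinv * k) % p) + p * ((pinv * k) % q) ≡ k [ZMOD p * q]) ∧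
    (∀ k : ℤ, 0 < k → k < p + q → ¬ p ∣ k → ¬ q ∣ k →
      q * ((qinv * k) % p) + p * ((pinv * k) % q) = p * q + k) := by
  obtain ⟨c, hc⟩ : p ∣ 1 - q * qinv := Int.ModEq.dvd hqinv
  obtain ⟨d, hd⟩ : q ∣ 1 - p * pinv := Int.ModEq.dvd hpinv
  have key : ∀ k : ℤ, p * q ∣ (q * ((qinv * k) % p) + p * ((pinv * k) % q)) - k := by
    intro k
    apply hco.mul_dvd
    · refine ⟨(pinv * k) % q - c * k - q * (qinv * k / p), ?_⟩
      rw [Int.emod_def (qinv * k) p]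
      linear_combination (-k) * hc
    · refine ⟨(qinv * k) % p - d * k - p * (pinv * k / q), ?_⟩
      rw [Int.emod_def (pinv * k) q]
      linear_combination (-k) * hd
  constructor
  · intro k
    exact Int.modEq_iff_dvd.mpr (dvd_sub_comm.mp (key k))
  · intro k hk0 hk1 hpk hqk
    set a := (qinv * k) % p with ha
    set b := (pinv * k) % q with hb
    have ha0 : 0 ≤ a := Int.emod_nonneg _ hp.ne'
    have ha1 : a < p := Int.emod_lt_of_pos _ hp
    have hb0 : 0 ≤ b := Int.emod_nonneg _ hq.ne'
    have hb1 : b < q := Int.emod_lt_of_pos _ hq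
    obtain ⟨m, hm⟩ := key k
    rw [← ha, ← hb] at hm
    have hane : a ≠ 0 := by
      intro h
      exact hpk ⟨b - q * m, by linear_combination q * h - hm⟩
    have hbne : b ≠ 0 := by
      intro h
      exact hqk ⟨a - p * m, by linear_combination p * h - hm⟩
    have ha2 : 1 ≤ a := by omega
    have hb2 : 1 ≤ b := by omega
    -- S - k = p*q*m, with 0 < S - k < 2*p*q
    have hS1 : 0 < p * q * m := by
      rw [← hm]
      have h1 : q * 1 ≤ q * a := by exact mul_le_mul_of_nonneg_left ha2 hq.le
      have h2 : p * 1 ≤ p * b := by exact mul_le_mul_of_nonneg_left hb2 hp.le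
      nlinarith
    have hS2 : p * q * m < 2 * (p * q) := by
      rw [← hm]
      have h1 : q * a ≤ q * (p - 1) := mul_le_mul_of_nonneg_left (by omega) hq.le
      have h2 : p * b ≤ p * (q - 1) := mul_le_mul_of_nonneg_left (by omega) hp.le
      nlinarith
    have hpq : 0 < p * q := mul_pos hp hq
    have hm1 : m = 1 := by
      have h1 : 0 < m := by nlinarith
      have h2 : m < 2 := by nlinarith
      omega
    rw [hm1, mul_one] at hm
    linarith
end

section
/- With ψ and Λ as above, the finite-coordinate part of the orbit of the point (∞, …, ∞) under the ψ-conjugated Λ-action is contained in the set ([pq-1, pq) ∪ (pq, pq+1])ⁿ; that is, every element of Λ·{(∞,…,∞)} lying in ℚⁿ has each coordinate in [pq-1, pq) ∪ (pq, pq+1]. -/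
/-- `y ↦ c + 1/y` on `ℚ ∪ {∞}` (`none = ∞`), with `1/∞ = 0`, `1/0 = ∞`. -/
def psi1 (c : ℚ) : Option ℚ → Option ℚ
  | none => some c
  | some x => if x = 0 then none else some (c + x⁻¹)

/-- The inverse map `α ↦ 1/(α - c)`, with `∞ ↦ 0` and `c ↦ ∞`. -/
def psiInv1 (c : ℚ) : Option ℚ → Option ℚ
  | none => some 0
  | some a => if a = c then none else some (a - c)⁻¹

/-- Addition of an integer on `ℚ ∪ {∞}`, with `l + ∞ = ∞`. -/
def addZ (l : ℤ) : Option ℚ → Option ℚ := Option.map (fun t => (l : ℚ) + t)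

/-- Every element of the orbit `Λ·{(∞,…,∞)}` (under `l · α := ψ(l + ψ⁻¹(α))`)
lying in `ℚⁿ` has each coordinate in `[pq-1, pq) ∪ (pq, pq+1]`. -/
theorem stmt8 (n : ℕ) (p q : ℤ) (l : Fin n → ℤ) (hl : ∑ i, l i = 0)
    (a : Fin n → ℚ)
    (ha : ∀ i, psi1 ((p * q : ℤ) : ℚ)
        (addZ (l i) (psiInv1 ((p * q : ℤ) : ℚ) none)) = some (a i)) :
    ∀ i, (((p * q : ℤ) : ℚ) - 1 ≤ a i ∧ a i < ((p * q : ℤ) : ℚ)) ∨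
      (((p * q : ℤ) : ℚ) < a i ∧ a i ≤ ((p * q : ℤ) : ℚ) + 1) := by
  intro i
  have h := ha i
  simp only [psiInv1, addZ, Option.map_some, add_zero, psi1] at h
  by_cases hz : (l i : ℚ) = 0
  · simp [hz] at h
  · rw [if_neg hz] at h
    have hai : a i = ((p * q : ℤ) : ℚ) + ((l i : ℚ))⁻¹ := (Option.some_injective _ h).symm
    have hli : l i ≠ 0 := by exact_mod_cast hz
    have hmul : (l i : ℚ) * ((l i : ℚ))⁻¹ = 1 := mul_inv_cancel₀ hz
    rcases lt_or_gt_of_ne hli with hn | hp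
    · left
      have h1 : (l i : ℚ) ≤ -1 := by
        have h2 : l i ≤ -1 := by omega
        exact_mod_cast h2
      have hinv : ((l i : ℚ))⁻¹ < 0 := inv_neg''.mpr (by linarith)
      constructor
      · rw [hai]; nlinarith
      · rw [hai]; linarith
    · right
      have h1 : (1 : ℚ) ≤ (l i : ℚ) := by exact_mod_cast hp
      have hinv : (0 : ℚ) < ((l i : ℚ))⁻¹ := inv_pos.mpr (by linarith)
      constructor
      · rw [hai]; linarith
      · rw [hai]; nlinarith
end

section
/- Let N > q be integers and let y ∈ ℚ with fractional part [−y] ≥ (N−q−1)/(N−q). Then for every positive integer k, writing s = ⌈k/(N−q)⌉ and k = s(N−q) − t with 0 ≤ t < N−q, one has (1/k)·(⌈k/(N−q)⌉ + ⌊[−y]·k⌋) ≥ 1, with equality attained at k = 1 when [−y] ≥ (N−q−1)/(N−q); hence inf over k > 0 of (1/k)·(⌈k/(N−q)⌉ + ⌊[−y]·k⌋) = 1. -/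
lemma stmt13_key (d f : ℚ) (hd : 1 ≤ d) (hf : (d - 1) / d ≤ f) (k : ℤ) (hk : 0 < k) :
    (1 : ℚ) ≤ (1 / (k : ℚ)) * ((⌈(k : ℚ) / d⌉ + ⌊f * k⌋ : ℤ) : ℚ) := by
  have hd0 : (0 : ℚ) < d := by linarith
  have hk0 : (0 : ℚ) < (k : ℚ) := by exact_mod_cast hk
  have h1 : (d - 1) / d * (k : ℚ) ≤ f * k :=
    mul_le_mul_of_nonneg_right hf hk0.le
  have heq : (d - 1) / d * (k : ℚ) = ((k : ℤ) : ℚ) + (-(k / d)) := by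
    field_simp
    ring
  have h2 : (k : ℤ) - ⌈(k : ℚ) / d⌉ ≤ ⌊f * (k : ℚ)⌋ := by
    have := Int.floor_mono (heq ▸ h1)
    rwa [Int.floor_intCast_add, Int.floor_neg] at this
  have h3 : (k : ℤ) ≤ ⌈(k : ℚ) / d⌉ + ⌊f * (k : ℚ)⌋ := by omega
  have h4 : (k : ℚ) ≤ ((⌈(k : ℚ) / d⌉ + ⌊f * (k : ℚ)⌋ : ℤ) : ℚ) := by exact_mod_cast h3
  rw [one_div, inv_mul_eq_div, le_div_iff₀ hk0, one_mul]
  exact h4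

/-- Let `N > q` be integers and `y ∈ ℚ` with `[−y] ≥ (N−q−1)/(N−q)`.  Then for all
integers `k > 0`, `(1/k)·(⌈k/(N−q)⌉ + ⌊[−y]·k⌋) ≥ 1`, with equality at `k = 1`;
hence the infimum over `k > 0` of this quantity is `1`. -/
theorem stmt13 (N q : ℤ) (hNq : q < N) (y : ℚ)
    (hy : ((N : ℚ) - q - 1) / ((N : ℚ) - q) ≤ Int.fract (-y)) :
    (∀ k : ℤ, 0 < k →
      (1 : ℚ) ≤ (1 / (k : ℚ)) * ((⌈(k : ℚ) / ((N : ℚ) - q)⌉ + ⌊Int.fract (-y) * k⌋ : ℤ) : ℚ)) ∧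
    ((1 / ((1 : ℤ) : ℚ)) *
        ((⌈((1 : ℤ) : ℚ) / ((N : ℚ) - q)⌉ + ⌊Int.fract (-y) * ((1 : ℤ) : ℚ)⌋ : ℤ) : ℚ) = 1) ∧
    IsLeast {x : ℚ | ∃ k : ℤ, 0 < k ∧
      x = (1 / (k : ℚ)) * ((⌈(k : ℚ) / ((N : ℚ) - q)⌉ + ⌊Int.fract (-y) * k⌋ : ℤ) : ℚ)} 1 := by
  have hd : (1 : ℚ) ≤ (N : ℚ) - q := by
    have : q + 1 ≤ N := hNq
    have : ((q : ℚ) + 1) ≤ (N : ℚ) := by exact_mod_cast this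
    linarith
  have hmain := fun k hk => stmt13_key ((N : ℚ) - q) (Int.fract (-y)) hd hy k hk
  have heq1 : (1 / ((1 : ℤ) : ℚ)) *
      ((⌈((1 : ℤ) : ℚ) / ((N : ℚ) - q)⌉ + ⌊Int.fract (-y) * ((1 : ℤ) : ℚ)⌋ : ℤ) : ℚ) = 1 := by
    have hceil : ⌈((1 : ℤ) : ℚ) / ((N : ℚ) - q)⌉ = 1 := by
      have hpos : (0:ℤ) < ⌈((1 : ℤ) : ℚ) / ((N : ℚ) - q)⌉ := by
        rw [Int.lt_ceil]; positivity
      have hle : ⌈((1 : ℤ) : ℚ) / ((N : ℚ) - q)⌉ ≤ 1 := by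
        apply Int.ceil_le.mpr
        push_cast
        rw [div_le_one (by linarith : (0:ℚ) < (N : ℚ) - q)]
        linarith
      omega
    have hfl : ⌊Int.fract (-y) * ((1 : ℤ) : ℚ)⌋ = 0 := by
      rw [Int.floor_eq_zero_iff]
      constructor
      · simpa using Int.fract_nonneg (-y)
      · simpa using Int.fract_lt_one (-y)
    rw [hceil, hfl]
    norm_num
  refine ⟨hmain, heq1, ⟨⟨1, one_pos, heq1.symm⟩, ?_⟩⟩
  rintro x ⟨k, hk, rfl⟩
  exact hmain k hk
end
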